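/- Let A, B be C*-algebras, δ : A → M(A ⊗ B) a *-homomorphism, ε : C → M(C ⊗ B) a *-homomorphism, and φ : A → C a surjective *-homomorphism satisfying (φ ⊗ id) ∘ δ = ε ∘ φ (equivariance). If the closed linear span of δ(A)(1 ⊗ B) equals A ⊗ B, then the closed linear span of ε(C)(1 ⊗ B) equals C ⊗ B. -/
import Mathlib


open MultiplierAlgebra

/-- An abstract presentation of the minimal (spatial) C*-tensor product `A ⊗ B`:
a C*-algebra `T` together with the elementary-tensor map `tmul`, such that the
elementary tensors have dense linear span in `T`. -/
structure MinTensorProduct (A B T : Type*) [NonUnitalCStarAlgebra A]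
    [NonUnitalCStarAlgebra B] [NonUnitalCStarAlgebra T] where
  tmul : A → B → T
  dense_span : closure (Submodule.span ℂ {t : T | ∃ a b, t = tmul a b} : Set T) = Set.univ

open scoped CStarAlgebra in
private lemma my_coe_inj {E : Type*} [NonUnitalCStarAlgebra E] :
    Function.Injective ((↑) : E → 𝓜(ℂ, E)) := by
  intro x y h
  have hmul : ∀ z : E, x * z = y * z := by
    intro z
    have h1 : ((x : 𝓜(ℂ, E)).fst : E →L[ℂ] E) = (y : 𝓜(ℂ, E)).fst := by rw [h]
    rw [DoubleCentralizer.coe_fst, DoubleCentralizer.coe_fst] at h1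
    simpa using DFunLike.congr_fun h1 z
  have hd : (x - y) * star (x - y) = 0 := by
    rw [sub_mul, sub_eq_zero]
    exact hmul (star (x - y))
  have hn : ‖x - y‖ = 0 := by
    have := CStarRing.norm_self_mul_star (x := x - y)
    rw [hd, norm_zero] at this
    nlinarith [norm_nonneg (x - y)]
  rw [← sub_eq_zero, ← norm_eq_zero]
  exact hn

/-- Nondegeneracy passes to equivariant quotients: given *-homomorphisms
`δ : A → M(A ⊗ B)` and `ε : C → M(C ⊗ B)`, a surjective *-homomorphism `φ : A → C`
satisfying the equivariance condition `(φ ⊗ id) ∘ δ = ε ∘ φ` (where `φ ⊗ id` denotes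
the multiplier extension `Φbar` of the induced map `Φ = φ ⊗ id : A ⊗ B → C ⊗ B`), if
`clspan δ(A)(1 ⊗ B) = A ⊗ B` then `clspan ε(C)(1 ⊗ B) = C ⊗ B`.  The products
`δ(a)(1 ⊗ b)`, a priori multipliers, are assumed to lie in `A ⊗ B` (via `pA`), and
similarly for `ε` (via `pC`). -/

theorem nondegenerate_of_equivariant_quotient {A B C TAB TCB : Type*}
    [NonUnitalCStarAlgebra A] [NonUnitalCStarAlgebra B] [NonUnitalCStarAlgebra C]
    [NonUnitalCStarAlgebra TAB] [NonUnitalCStarAlgebra TCB]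
    (tAB : MinTensorProduct A B TAB) (tCB : MinTensorProduct C B TCB)
    (δ : A →⋆ₙₐ[ℂ] 𝓜(ℂ, TAB)) (ε : C →⋆ₙₐ[ℂ] 𝓜(ℂ, TCB))
    (φ : A →⋆ₙₐ[ℂ] C) (hφ : Function.Surjective φ)
    -- the induced map `Φ = φ ⊗ id : A ⊗ B → C ⊗ B` ...
    (Φ : TAB →⋆ₙₐ[ℂ] TCB) (hΦ : ∀ a b, Φ (tAB.tmul a b) = tCB.tmul (φ a) b)
    -- ... and its extension `Φbar = φ ⊗ id : M(A ⊗ B) → M(C ⊗ B)` to multipliers: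
    (Φbar : 𝓜(ℂ, TAB) →⋆ₙₐ[ℂ] 𝓜(ℂ, TCB)) (hΦbar : ∀ t : TAB, Φbar t = (Φ t : 𝓜(ℂ, TCB)))
    -- the multipliers `1 ⊗ b` of `A ⊗ B` and of `C ⊗ B`, intertwined by `Φbar`:
    (oneA : B → 𝓜(ℂ, TAB)) (oneC : B → 𝓜(ℂ, TCB)) (hone : ∀ b, Φbar (oneA b) = oneC b)
    -- equivariance `(φ ⊗ id) ∘ δ = ε ∘ φ`:
    (hequiv : ∀ a, Φbar (δ a) = ε (φ a))
    -- the products `δ(a)(1 ⊗ b)` and `ε(c)(1 ⊗ b)` lie in the tensor products: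
    (pA : A → B → TAB) (hpA : ∀ a b, (pA a b : 𝓜(ℂ, TAB)) = δ a * oneA b)
    (pC : C → B → TCB) (hpC : ∀ c b, (pC c b : 𝓜(ℂ, TCB)) = ε c * oneC b)
    -- nondegeneracy of `δ`:
    (hnd : closure (Submodule.span ℂ {t : TAB | ∃ a b, t = pA a b} : Set TAB) = Set.univ) :
    closure (Submodule.span ℂ {t : TCB | ∃ c b, t = pC c b} : Set TCB) = Set.univ := by

  have hcont : Continuous Φ :=
    have : ContinuousLinearMapClass (TAB →⋆ₙₐ[ℂ] TCB) ℂ TAB TCB :=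
      NonUnitalStarAlgHom.instContinuousLinearMapClassComplex
    map_continuous Φ
  -- Φ sends generators to generators
  have key : ∀ a b, Φ (pA a b) = pC (φ a) b := by
    intro a b
    apply my_coe_inj
    rw [← hΦbar, hpA, map_mul, hone, hequiv, hpC]
  set SA := Submodule.span ℂ {t : TAB | ∃ a b, t = pA a b} with hSA
  set SC := Submodule.span ℂ {t : TCB | ∃ c b, t = pC c b} with hSC
  -- Φ '' SA ⊆ SC
  have himg : Φ '' (SA : Set TAB) ⊆ (SC : Set TCB) := by
    rintro _ ⟨x, hx, rfl⟩
    have : x ∈ SA := hx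
    refine Submodule.span_induction (p := fun x _ => Φ x ∈ SC) ?_ ?_ ?_ ?_ this
    · rintro _ ⟨a, b, rfl⟩
      exact Submodule.subset_span ⟨φ a, b, key a b⟩
    · simp only [map_zero]; exact SC.zero_mem
    · intro u v _ _ hu hv
      rw [map_add]; exact SC.add_mem hu hv
    · intro c u _ hu
      rw [map_smul]; exact SC.smul_mem c hu
  -- every elementary tensor of TCB lies in closure SC
  have helem : ∀ c b, tCB.tmul c b ∈ closure (SC : Set TCB) := by
    intro c b
    obtain ⟨a, rfl⟩ := hφ c
    rw [← hΦ]
    have hmem : tAB.tmul a b ∈ closure (SA : Set TAB) := by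
      rw [hnd]; trivial
    have : Φ (tAB.tmul a b) ∈ Φ '' closure (SA : Set TAB) := ⟨_, hmem, rfl⟩
    have hsub : Φ '' closure (SA : Set TAB) ⊆ closure (Φ '' (SA : Set TAB)) :=
      image_closure_subset_closure_image hcont
    exact closure_mono himg (hsub this)
  -- closure SC is a submodule containing the elementary tensors
  have hspan : (Submodule.span ℂ {t : TCB | ∃ c b, t = tCB.tmul c b} : Set TCB)
      ⊆ closure (SC : Set TCB) := by
    rw [← SC.topologicalClosure_coe]
    apply Submodule.span_le.mpr
    rintro _ ⟨c, b, rfl⟩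
    exact helem c b
  apply Set.eq_univ_of_univ_subset
  calc (Set.univ : Set TCB)
      = closure (Submodule.span ℂ {t : TCB | ∃ c b, t = tCB.tmul c b} : Set TCB) :=
        tCB.dense_span.symm
    _ ⊆ closure (closure (SC : Set TCB)) := closure_mono hspan
    _ = closure (SC : Set TCB) := closure_closure
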